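/- Let G be a graph on n vertices with independence number α ≥ 1 and independence polynomial P(λ) = Σ_k i_k λ^k. Then for all λ > 0, P(λ) ≥ (λ/α + 1/n)·P'(λ). Equivalently, α(G)/ᾱ_G(λ) ≥ 1 + α(G)/(λn), where ᾱ_G(λ) = λP'(λ)/P(λ). -/

import Mathlib

open Finset MeasureTheory Real
open scoped Classical

noncomputable def indSets {V : Type*} [Fintype V] (G : SimpleGraph V) : Finset (Finset V) :=
  Finset.univ.filter (fun s => ∀ u ∈ s, ∀ v ∈ s, ¬ G.Adj u v)

/-- The independence polynomial (hard-core partition function). -/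
noncomputable def indPoly {V : Type*} [Fintype V] (G : SimpleGraph V) (x : ℝ) : ℝ :=
  ∑ s ∈ indSets G, x ^ s.card

/-- Expected size of an independent set from the hard-core model at fugacity x. -/
noncomputable def avgSize {V : Type*} [Fintype V] (G : SimpleGraph V) (x : ℝ) : ℝ :=
  x * deriv (indPoly G) x / indPoly G x

section Aux

variable {V : Type*} [Fintype V] (G : SimpleGraph V)

lemma mem_indSets {s : Finset V} : s ∈ indSets G ↔ ∀ u ∈ s, ∀ v ∈ s, ¬ G.Adj u v := by
  simp [indSets]

lemma indSets_mono {s t : Finset V} (hs : s ∈ indSets G) (hts : t ⊆ s) : t ∈ indSets G := by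
  rw [mem_indSets] at hs ⊢
  exact fun u hu v hv => hs u (hts hu) v (hts hv)

/-- vertices extending an independent set -/
noncomputable def extSet (T : Finset V) : Finset V :=
  Finset.univ.filter (fun v => v ∉ T ∧ insert v T ∈ indSets G)

lemma mem_extSet {T : Finset V} {v : V} : v ∈ extSet G T ↔ v ∉ T ∧ insert v T ∈ indSets G := by
  simp [extSet]

/-- number of independent sets of size k -/
noncomputable def J (k : ℕ) : ℕ := ((indSets G).filter (fun s => s.card = k)).card

lemma sum_extSet_card (k : ℕ) :
    ∑ T ∈ (indSets G).filter (fun s => s.card = k), (extSet G T).card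
      = (k + 1) * J G (k + 1) := by
  have h1 : ∑ T ∈ (indSets G).filter (fun s => s.card = k), (extSet G T).card
      = (((indSets G).filter (fun s => s.card = k)).sigma (fun T => extSet G T)).card :=
    (Finset.card_sigma _ _).symm
  have h2 : ∑ S ∈ (indSets G).filter (fun s => s.card = k + 1), S.card
      = (((indSets G).filter (fun s => s.card = k + 1)).sigma (fun S => S)).card :=
    (Finset.card_sigma _ _).symm
  have h3 : ∑ S ∈ (indSets G).filter (fun s => s.card = k + 1), S.card = (k + 1) * J G (k + 1) := by
    rw [J, mul_comm]
    exact Finset.sum_const_nat (fun s hs => (Finset.mem_filter.1 hs).2)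
  rw [h1, ← h3, h2]
  apply Finset.card_bij' (fun p _ => (⟨insert p.2 p.1, p.2⟩ : Σ _ : Finset V, V))
    (fun p _ => (⟨p.1.erase p.2, p.2⟩ : Σ _ : Finset V, V))
  · rintro ⟨T, v⟩ hp
    rw [Finset.mem_sigma] at hp
    obtain ⟨hT, hv⟩ := hp
    rw [Finset.mem_filter] at hT
    rw [mem_extSet] at hv
    rw [Finset.mem_sigma, Finset.mem_filter]
    refine ⟨⟨hv.2, ?_⟩, Finset.mem_insert_self _ _⟩
    rw [Finset.card_insert_of_notMem hv.1, hT.2]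
  · rintro ⟨S, v⟩ hp
    rw [Finset.mem_sigma] at hp
    obtain ⟨hS, hv⟩ := hp
    rw [Finset.mem_filter] at hS
    rw [Finset.mem_sigma, Finset.mem_filter]
    refine ⟨⟨indSets_mono G hS.1 (Finset.erase_subset _ _), ?_⟩, ?_⟩
    · rw [Finset.card_erase_of_mem hv, hS.2]; omega
    · rw [mem_extSet]
      refine ⟨Finset.notMem_erase _ _, ?_⟩
      rw [Finset.insert_erase hv]
      exact hS.1
  · rintro ⟨T, v⟩ hp
    rw [Finset.mem_sigma] at hp
    have hv : v ∉ T := (mem_extSet G |>.1 hp.2).1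
    simp [Finset.erase_insert hv]
  · rintro ⟨S, v⟩ hp
    rw [Finset.mem_sigma] at hp
    simp [Finset.insert_erase hp.2]

variable {V : Type*} [Fintype V] (G : SimpleGraph V)
lemma card_eq_sum_ite (s : Finset V) :
    s.card = ∑ u ∈ Finset.univ, if u ∈ s then 1 else 0 := by
  rw [Finset.sum_ite_mem, Finset.univ_inter, Finset.sum_const, smul_eq_mul, mul_one]

lemma local_bound {S : Finset V} (hS : S ∈ indSets G) {k : ℕ} (hcard : S.card = k + 1) :
    ∑ v ∈ S, (extSet G (S.erase v)).card ≤ Fintype.card V + k * (extSet G S).card := by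
  have hswap : ∑ v ∈ S, (extSet G (S.erase v)).card
      = ∑ u ∈ Finset.univ, (S.filter (fun v => u ∈ extSet G (S.erase v))).card := by
    rw [Finset.sum_congr rfl (fun v _ => card_eq_sum_ite (extSet G (S.erase v))),
      Finset.sum_comm]
    exact Finset.sum_congr rfl (fun u _ => (Finset.card_filter _ _).symm)
  rw [hswap]
  -- split over u ∈ extSet G S or not
  rw [← Finset.sum_filter_add_sum_filter_not Finset.univ (fun u => u ∈ extSet G S)]
  have hb1 : ∑ u ∈ Finset.univ.filter (fun u => u ∈ extSet G S),
      (S.filter (fun v => u ∈ extSet G (S.erase v))).card ≤ (extSet G S).card * (k + 1) := by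
    have hc : (Finset.univ.filter (fun u => u ∈ extSet G S)) = extSet G S := by
      ext u; simp
    rw [hc]
    calc ∑ u ∈ extSet G S, (S.filter (fun v => u ∈ extSet G (S.erase v))).card
        ≤ ∑ _u ∈ extSet G S, (k + 1) := by
          apply Finset.sum_le_sum
          intro u _
          calc (S.filter (fun v => u ∈ extSet G (S.erase v))).card ≤ S.card :=
                Finset.card_le_card (Finset.filter_subset _ _)
            _ = k + 1 := hcard
      _ = (extSet G S).card * (k + 1) := by rw [Finset.sum_const, smul_eq_mul]
  have hb2 : ∑ u ∈ Finset.univ.filter (fun u => u ∉ extSet G S),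
      (S.filter (fun v => u ∈ extSet G (S.erase v))).card
      ≤ Fintype.card V - (extSet G S).card := by
    have hc2 : (Finset.univ.filter (fun u => u ∉ extSet G S)).card
        = Fintype.card V - (extSet G S).card := by
      have := Finset.card_filter_add_card_filter_not
        (s := (Finset.univ : Finset V)) (p := fun u => u ∈ extSet G S)
      have hc : (Finset.univ.filter (fun u => u ∈ extSet G S)) = extSet G S := by
        ext u; simp
      rw [hc] at this
      rw [Finset.card_univ] at this
      omega
    calc ∑ u ∈ Finset.univ.filter (fun u => u ∉ extSet G S),
        (S.filter (fun v => u ∈ extSet G (S.erase v))).card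
        ≤ ∑ _u ∈ Finset.univ.filter (fun u => u ∉ extSet G S), 1 := by
          apply Finset.sum_le_sum
          intro u hu
          rw [Finset.mem_filter] at hu
          apply Finset.card_le_one.2
          intro v₁ hv₁ v₂ hv₂
          rw [Finset.mem_filter, mem_extSet] at hv₁ hv₂
          obtain ⟨hv₁S, hu₁, hins₁⟩ := hv₁
          obtain ⟨hv₂S, hu₂, hins₂⟩ := hv₂
          by_contra hne
          by_cases huS : u ∈ S
          · have e1 : u = v₁ := by
              by_contra h'
              exact hu₁ (Finset.mem_erase.2 ⟨h', huS⟩)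
            have e2 : u = v₂ := by
              by_contra h'
              exact hu₂ (Finset.mem_erase.2 ⟨h', huS⟩)
            exact hne (e1 ▸ e2)
          · -- u ∉ S and u ∉ extSet G S: insert u S not independent
            have hni : insert u S ∉ indSets G := by
              intro h
              exact hu.2 (mem_extSet G |>.2 ⟨huS, h⟩)
            -- extract an adjacent pair
            rw [mem_indSets] at hni
            push_neg at hni
            obtain ⟨a, ha, b, hb, hadj⟩ := hni
            rw [mem_indSets] at hS
            rw [Finset.mem_insert] at ha hb
            -- get w ∈ S with G.Adj u w
            have hw : ∃ w ∈ S, G.Adj u w := by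
              rcases ha with rfl | haS
              · rcases hb with rfl | hbS
                · exact absurd hadj (G.irrefl)
                · exact ⟨b, hbS, hadj⟩
              · rcases hb with rfl | hbS
                · exact ⟨a, haS, hadj.symm⟩
                · exact absurd hadj (hS a haS b hbS)
            obtain ⟨w, hwS, hadjw⟩ := hw
            -- w differs from v₁ or v₂
            have : ∀ i : Fin 2, True := fun _ => trivial
            have hcase : w ≠ v₁ ∨ w ≠ v₂ := by
              by_contra hc
              push_neg at hc
              exact hne (hc.1 ▸ hc.2)
            rcases hcase with hwv | hwv
            · rw [mem_indSets] at hins₁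
              exact hins₁ u (Finset.mem_insert_self _ _) w
                (Finset.mem_insert_of_mem (Finset.mem_erase.2 ⟨hwv, hwS⟩)) hadjw
            · rw [mem_indSets] at hins₂
              exact hins₂ u (Finset.mem_insert_self _ _) w
                (Finset.mem_insert_of_mem (Finset.mem_erase.2 ⟨hwv, hwS⟩)) hadjw
      _ = (Finset.univ.filter (fun u => u ∉ extSet G S)).card := by
          rw [Finset.sum_const, smul_eq_mul, mul_one]
      _ ≤ Fintype.card V - (extSet G S).card := le_of_eq hc2
  have hle : (extSet G S).card ≤ Fintype.card V := by
    calc (extSet G S).card ≤ Finset.univ.card := Finset.card_le_univ _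
      _ = Fintype.card V := Finset.card_univ
  have hmul : (extSet G S).card * (k + 1) = k * (extSet G S).card + (extSet G S).card := by ring
  omega
lemma sum_sq_bound (k : ℕ) :
    ∑ T ∈ (indSets G).filter (fun s => s.card = k), (extSet G T).card ^ 2
      ≤ Fintype.card V * J G (k + 1) + (k * (k + 2)) * J G (k + 2) := by
  have h1 : ∑ T ∈ (indSets G).filter (fun s => s.card = k), (extSet G T).card ^ 2
      = ∑ S ∈ (indSets G).filter (fun s => s.card = k + 1),
          ∑ v ∈ S, (extSet G (S.erase v)).card := by
    have e1 : ∀ T : Finset V, (extSet G T).card ^ 2 = ∑ _v ∈ extSet G T, (extSet G T).card := by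
      intro T; rw [Finset.sum_const, smul_eq_mul, sq]
    rw [Finset.sum_congr rfl (fun T _ => e1 T)]
    rw [← Finset.sum_sigma ((indSets G).filter (fun s => s.card = k)) (fun T => extSet G T)
      (fun p => (extSet G p.1).card)]
    rw [← Finset.sum_sigma ((indSets G).filter (fun s => s.card = k + 1)) (fun S => S)
      (fun p => (extSet G (p.1.erase p.2)).card)]
    apply Finset.sum_bij' (fun p _ => (⟨insert p.2 p.1, p.2⟩ : Σ _ : Finset V, V))
      (fun p _ => (⟨p.1.erase p.2, p.2⟩ : Σ _ : Finset V, V))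
    · rintro ⟨T, v⟩ hp
      rw [Finset.mem_sigma] at hp
      obtain ⟨hT, hv⟩ := hp
      rw [Finset.mem_filter] at hT
      rw [mem_extSet] at hv
      rw [Finset.mem_sigma, Finset.mem_filter]
      refine ⟨⟨hv.2, ?_⟩, Finset.mem_insert_self _ _⟩
      rw [Finset.card_insert_of_notMem hv.1, hT.2]
    · rintro ⟨S, v⟩ hp
      rw [Finset.mem_sigma] at hp
      obtain ⟨hS, hv⟩ := hp
      rw [Finset.mem_filter] at hS
      rw [Finset.mem_sigma, Finset.mem_filter]
      refine ⟨⟨indSets_mono G hS.1 (Finset.erase_subset _ _), ?_⟩, ?_⟩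
      · rw [Finset.card_erase_of_mem hv, hS.2]; omega
      · rw [mem_extSet]
        refine ⟨Finset.notMem_erase _ _, ?_⟩
        rw [Finset.insert_erase hv]
        exact hS.1
    · rintro ⟨T, v⟩ hp
      rw [Finset.mem_sigma] at hp
      have hv : v ∉ T := (mem_extSet G |>.1 hp.2).1
      simp [Finset.erase_insert hv]
    · rintro ⟨S, v⟩ hp
      rw [Finset.mem_sigma] at hp
      simp [Finset.insert_erase hp.2]
    · rintro ⟨T, v⟩ hp
      rw [Finset.mem_sigma] at hp
      have hv : v ∉ T := (mem_extSet G |>.1 hp.2).1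
      simp [Finset.erase_insert hv]
  rw [h1]
  calc ∑ S ∈ (indSets G).filter (fun s => s.card = k + 1), ∑ v ∈ S, (extSet G (S.erase v)).card
      ≤ ∑ S ∈ (indSets G).filter (fun s => s.card = k + 1),
          (Fintype.card V + k * (extSet G S).card) := by
        apply Finset.sum_le_sum
        intro S hS
        rw [Finset.mem_filter] at hS
        exact local_bound G hS.1 hS.2
    _ = Fintype.card V * J G (k + 1) + (k * (k + 2)) * J G (k + 2) := by
        rw [Finset.sum_add_distrib, Finset.sum_const, smul_eq_mul, ← Finset.mul_sum,
          sum_extSet_card G (k + 1)]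
        simp only [J, show k + 1 + 1 = k + 2 from rfl]
        ring
lemma J_eq_zero {j : ℕ} (hj : (indSets G).sup Finset.card < j) : J G j = 0 := by
  rw [J, Finset.card_eq_zero, Finset.filter_eq_empty_iff]
  intro s hs hcard
  have := Finset.le_sup (f := Finset.card) hs
  omega

lemma cs_bound (k : ℕ) :
    ((k : ℝ) + 1) ^ 2 * (J G (k + 1) : ℝ) ^ 2
      ≤ (J G k : ℝ) * ((Fintype.card V : ℝ) * (J G (k + 1) : ℝ)
          + ((k : ℝ) * ((k : ℝ) + 2)) * (J G (k + 2) : ℝ)) := by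
  set Ik := (indSets G).filter (fun s => s.card = k) with hIk
  have hcs := Finset.sum_mul_sq_le_sq_mul_sq Ik (fun _ => (1 : ℝ))
    (fun T => ((extSet G T).card : ℝ))
  simp only [one_pow, one_mul, Finset.sum_const, nsmul_eq_mul, smul_eq_mul, mul_one] at hcs
  have h1 : (∑ T ∈ Ik, ((extSet G T).card : ℝ)) = (((k + 1) * J G (k + 1) : ℕ) : ℝ) := by
    rw [← Nat.cast_sum, sum_extSet_card G k]
  have h2 : (∑ T ∈ Ik, ((extSet G T).card : ℝ) ^ 2)
      ≤ ((Fintype.card V * J G (k + 1) + (k * (k + 2)) * J G (k + 2) : ℕ) : ℝ) := by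
    have h := sum_sq_bound G k
    have he : (∑ T ∈ Ik, ((extSet G T).card : ℝ) ^ 2)
        = ((∑ T ∈ Ik, (extSet G T).card ^ 2 : ℕ) : ℝ) := by push_cast; rfl
    rw [he]
    exact_mod_cast h
  have hcard : (Ik.card : ℝ) = (J G k : ℝ) := by rw [hIk]; rfl
  calc ((k : ℝ) + 1) ^ 2 * (J G (k + 1) : ℝ) ^ 2
      = (∑ T ∈ Ik, ((extSet G T).card : ℝ)) ^ 2 := by rw [h1]; push_cast; ring
    _ ≤ (Ik.card : ℝ) * ∑ T ∈ Ik, ((extSet G T).card : ℝ) ^ 2 := hcs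
    _ ≤ (J G k : ℝ) * ((Fintype.card V : ℝ) * (J G (k + 1) : ℝ)
          + ((k : ℝ) * ((k : ℝ) + 2)) * (J G (k + 2) : ℝ)) := by
        rw [hcard]
        refine le_trans (mul_le_mul_of_nonneg_left h2 (Nat.cast_nonneg _)) (le_of_eq ?_)
        push_cast
        ring

lemma step_helper {α : ℕ} (k : ℕ) (hkα : k + 1 ≤ α)
    (hbound : ((k : ℝ) * ((k : ℝ) + 2)) * (J G (k + 2) : ℝ) * (α : ℝ)
        ≤ (k : ℝ) * ((Fintype.card V : ℝ) * ((α : ℝ) - ((k : ℝ) + 1)) * (J G (k + 1) : ℝ))) :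
    (α : ℝ) * ((k : ℝ) + 1) * (J G (k + 1) : ℝ)
      ≤ (Fintype.card V : ℝ) * ((α : ℝ) - (k : ℝ)) * (J G k : ℝ) := by
  have hcs := cs_bound G k
  by_cases hJ : J G (k + 1) = 0
  · simp only [hJ, Nat.cast_zero, mul_zero]
    have h1 : (k : ℝ) ≤ (α : ℝ) := by exact_mod_cast Nat.le_of_succ_le hkα
    exact mul_nonneg (mul_nonneg (Nat.cast_nonneg _) (by linarith)) (Nat.cast_nonneg _)
  · have hJpos : (0 : ℝ) < (J G (k + 1) : ℝ) := by
      exact_mod_cast Nat.pos_of_ne_zero hJ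
    have hα0 : (0 : ℝ) < (α : ℝ) := by
      have : 0 < α := by omega
      exact_mod_cast this
    have e1 : (α : ℝ) * (((k : ℝ) + 1) ^ 2 * (J G (k + 1) : ℝ) ^ 2)
        ≤ (α : ℝ) * ((J G k : ℝ) * ((Fintype.card V : ℝ) * (J G (k + 1) : ℝ)
            + ((k : ℝ) * ((k : ℝ) + 2)) * (J G (k + 2) : ℝ))) :=
      mul_le_mul_of_nonneg_left hcs (le_of_lt hα0)
    have e3 : (J G k : ℝ) * (((k : ℝ) * ((k : ℝ) + 2)) * (J G (k + 2) : ℝ) * (α : ℝ))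
        ≤ (J G k : ℝ) * ((k : ℝ) * ((Fintype.card V : ℝ) * ((α : ℝ) - ((k : ℝ) + 1))
            * (J G (k + 1) : ℝ))) :=
      mul_le_mul_of_nonneg_left hbound (Nat.cast_nonneg _)
    have hfin : ((α : ℝ) * ((k : ℝ) + 1) * (J G (k + 1) : ℝ)) * (((k : ℝ) + 1) * (J G (k + 1) : ℝ))
        ≤ ((Fintype.card V : ℝ) * ((α : ℝ) - (k : ℝ)) * (J G k : ℝ))
            * (((k : ℝ) + 1) * (J G (k + 1) : ℝ)) := by nlinarith [e1, e3]
    exact le_of_mul_le_mul_right hfin (by positivity)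

lemma main_ind {α : ℕ} (hα : α = (indSets G).sup Finset.card) :
    ∀ m k : ℕ, k + m + 1 = α →
      (α : ℝ) * ((k : ℝ) + 1) * (J G (k + 1) : ℝ)
        ≤ (Fintype.card V : ℝ) * ((α : ℝ) - (k : ℝ)) * (J G k : ℝ) := by
  have hsup : (indSets G).sup Finset.card = α := hα.symm
  intro m
  induction m with
  | zero =>
    intro k hk
    have hz : J G (k + 2) = 0 := J_eq_zero G (by omega)
    have hzc : (J G (k + 2) : ℝ) = 0 := by exact_mod_cast hz
    have hαc : (α : ℝ) = (k : ℝ) + 1 := by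
      have h : k + 1 = α := by omega
      exact_mod_cast h.symm
    apply step_helper G k (by omega)
    rw [hzc, hαc]
    linarith
  | succ m ih =>
    intro k hk
    have hih := ih (k + 1) (by omega)
    push_cast at hih
    apply step_helper G k (by omega)
    have := mul_le_mul_of_nonneg_left hih (Nat.cast_nonneg k : (0:ℝ) ≤ (k:ℝ))
    nlinarith [this]
lemma coeff_bound {α : ℕ} (hα : α = (indSets G).sup Finset.card) (hα1 : 1 ≤ α)
    (hn : 0 < Fintype.card V) (k : ℕ) :
    ((k : ℝ) / α) * J G k + (((k : ℝ) + 1) / (Fintype.card V : ℝ)) * J G (k + 1)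
      ≤ (J G k : ℝ) := by
  have hα0 : (0 : ℝ) < (α : ℝ) := by exact_mod_cast hα1
  have hn0 : (0 : ℝ) < (Fintype.card V : ℝ) := by exact_mod_cast hn
  rcases lt_trichotomy k α with h | h | h
  · have key := main_ind G hα (α - k - 1) k (by omega)
    have e : (J G k : ℝ) - (((k : ℝ) / α) * J G k
          + (((k : ℝ) + 1) / (Fintype.card V : ℝ)) * J G (k + 1))
        = ((Fintype.card V : ℝ) * ((α : ℝ) - (k : ℝ)) * (J G k : ℝ)
            - (α : ℝ) * ((k : ℝ) + 1) * (J G (k + 1) : ℝ)) / ((α : ℝ) * (Fintype.card V : ℝ)) := by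
      field_simp
      ring
    have h2 : 0 ≤ (J G k : ℝ) - (((k : ℝ) / α) * J G k
        + (((k : ℝ) + 1) / (Fintype.card V : ℝ)) * J G (k + 1)) := by
      rw [e]
      apply div_nonneg (by linarith) (by positivity)
    linarith
  · have hz : (J G (k + 1) : ℝ) = 0 := by
      have := J_eq_zero G (j := k + 1) (by omega)
      exact_mod_cast this
    rw [hz, mul_zero, add_zero, h, div_self (ne_of_gt hα0), one_mul]
  · have hz1 : J G k = 0 := J_eq_zero G (by omega)
    have hz2 : J G (k + 1) = 0 := J_eq_zero G (by omega)
    simp [hz1, hz2]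
end Aux

theorem stmt16 {V : Type*} [Fintype V] [Nonempty V] (G : SimpleGraph V) (α : ℕ)
    (hα : α = (indSets G).sup Finset.card) (hα1 : 1 ≤ α) (l : ℝ) (hl : 0 < l) :
    (l / α + 1 / (Fintype.card V : ℝ)) * deriv (indPoly G) l ≤ indPoly G l ∧
      1 + (α : ℝ) / (l * (Fintype.card V : ℝ)) ≤ (α : ℝ) / avgSize G l := by
  have hn1 : 0 < Fintype.card V := Fintype.card_pos
  have hα0 : (0 : ℝ) < (α : ℝ) := by exact_mod_cast hα1
  have hn0 : (0 : ℝ) < (Fintype.card V : ℝ) := by exact_mod_cast hn1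
  have hD : HasDerivAt (indPoly G) (∑ s ∈ indSets G, (s.card : ℝ) * l ^ (s.card - 1)) l :=
    HasDerivAt.fun_sum (fun s _ => hasDerivAt_pow s.card l)
  have hderiv : deriv (indPoly G) l = ∑ s ∈ indSets G, (s.card : ℝ) * l ^ (s.card - 1) :=
    hD.deriv
  have hmaps : ∀ s ∈ indSets G, s.card ∈ Finset.range (Fintype.card V + 1) :=
    fun s _ => Finset.mem_range.2 (Nat.lt_succ_of_le (Finset.card_le_univ s))
  have hPsum : indPoly G l = ∑ k ∈ Finset.range (Fintype.card V + 1), (J G k : ℝ) * l ^ k := by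
    rw [indPoly, ← Finset.sum_fiberwise_of_maps_to hmaps (fun s => l ^ s.card)]
    refine Finset.sum_congr rfl fun k _ => ?_
    rw [Finset.sum_congr rfl (fun s hs => by rw [(Finset.mem_filter.1 hs).2]),
      Finset.sum_const, nsmul_eq_mul]
    rfl
  have hP'sum : deriv (indPoly G) l
      = ∑ k ∈ Finset.range (Fintype.card V + 1), (J G k : ℝ) * ((k : ℝ) * l ^ (k - 1)) := by
    rw [hderiv, ← Finset.sum_fiberwise_of_maps_to hmaps
      (fun s => (s.card : ℝ) * l ^ (s.card - 1))]
    refine Finset.sum_congr rfl fun k _ => ?_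
    rw [Finset.sum_congr rfl (fun s hs => by rw [(Finset.mem_filter.1 hs).2]),
      Finset.sum_const, nsmul_eq_mul]
    rfl
  have hP0 : 0 < indPoly G l := by
    rw [indPoly]
    apply Finset.sum_pos (fun s _ => pow_pos hl _)
    refine ⟨∅, ?_⟩
    rw [mem_indSets]
    simp
  have hP'0 : 0 < deriv (indPoly G) l := by
    rw [hP'sum]
    apply Finset.sum_pos'
    · intro k _
      positivity
    · refine ⟨1, Finset.mem_range.2 (by omega), ?_⟩
      have hJ1 : 0 < J G 1 := by
        rw [J, Finset.card_pos]
        obtain ⟨v⟩ := ‹Nonempty V›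
        refine ⟨{v}, ?_⟩
        rw [Finset.mem_filter]
        refine ⟨?_, Finset.card_singleton v⟩
        rw [mem_indSets]
        intro u hu w hw
        rw [Finset.mem_singleton] at hu hw
        subst hu; subst hw
        exact G.irrefl
      have hc : (0 : ℝ) < (J G 1 : ℝ) := by exact_mod_cast hJ1
      simpa using hc
  have hco : ∀ k : ℕ, ((k : ℝ) / α) * J G k
      + (((k : ℝ) + 1) / (Fintype.card V : ℝ)) * J G (k + 1) ≤ (J G k : ℝ) :=
    coeff_bound G hα hα1 hn1
  have hA : (l / α) * deriv (indPoly G) l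
      = ∑ k ∈ Finset.range (Fintype.card V + 1), ((k : ℝ) / α) * J G k * l ^ k := by
    rw [hP'sum, Finset.mul_sum]
    refine Finset.sum_congr rfl fun k _ => ?_
    match k with
    | 0 => simp
    | m + 1 =>
      simp only [Nat.add_sub_cancel, pow_succ]
      push_cast
      ring
  have hzt : (J G (Fintype.card V + 1) : ℝ) = 0 := by
    have hs : (indSets G).sup Finset.card ≤ Fintype.card V :=
      Finset.sup_le (fun s _ => Finset.card_le_univ s)
    have := J_eq_zero G (j := Fintype.card V + 1) (by omega)
    exact_mod_cast this
  have hB : (1 / (Fintype.card V : ℝ)) * deriv (indPoly G) l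
      = ∑ k ∈ Finset.range (Fintype.card V + 1),
          (((k : ℝ) + 1) / (Fintype.card V : ℝ)) * J G (k + 1) * l ^ k := by
    calc (1 / (Fintype.card V : ℝ)) * deriv (indPoly G) l
        = ∑ k ∈ Finset.range (Fintype.card V + 1),
            (1 / (Fintype.card V : ℝ)) * ((J G k : ℝ) * ((k : ℝ) * l ^ (k - 1))) := by
          rw [hP'sum, Finset.mul_sum]
      _ = ∑ k ∈ Finset.range (Fintype.card V),
            (1 / (Fintype.card V : ℝ)) * ((J G (k + 1) : ℝ) * (((k + 1 : ℕ) : ℝ) * l ^ (k + 1 - 1)))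
          + (1 / (Fintype.card V : ℝ)) * ((J G 0 : ℝ) * (((0 : ℕ) : ℝ) * l ^ (0 - 1))) :=
          Finset.sum_range_succ' _ _
      _ = ∑ k ∈ Finset.range (Fintype.card V),
            (((k : ℝ) + 1) / (Fintype.card V : ℝ)) * J G (k + 1) * l ^ k := by
          rw [Nat.cast_zero, zero_mul, mul_zero, mul_zero, add_zero]
          refine Finset.sum_congr rfl fun k _ => ?_
          simp only [Nat.add_sub_cancel]
          push_cast
          ring
      _ = ∑ k ∈ Finset.range (Fintype.card V + 1),
            (((k : ℝ) + 1) / (Fintype.card V : ℝ)) * J G (k + 1) * l ^ k := by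
          rw [Finset.sum_range_succ, hzt]
          simp
  have first : (l / α + 1 / (Fintype.card V : ℝ)) * deriv (indPoly G) l ≤ indPoly G l := by
    have expand : (l / α + 1 / (Fintype.card V : ℝ)) * deriv (indPoly G) l
        = ∑ k ∈ Finset.range (Fintype.card V + 1),
            (((k : ℝ) / α) * J G k * l ^ k
              + (((k : ℝ) + 1) / (Fintype.card V : ℝ)) * J G (k + 1) * l ^ k) := by
      rw [add_mul, hA, hB, ← Finset.sum_add_distrib]
    rw [expand, hPsum]
    apply Finset.sum_le_sum
    intro k _
    have h2 := mul_le_mul_of_nonneg_right (hco k) (le_of_lt (pow_pos hl k))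
    calc ((k : ℝ) / α) * J G k * l ^ k
          + (((k : ℝ) + 1) / (Fintype.card V : ℝ)) * J G (k + 1) * l ^ k
        = (((k : ℝ) / α) * J G k
            + (((k : ℝ) + 1) / (Fintype.card V : ℝ)) * J G (k + 1)) * l ^ k := by ring
      _ ≤ (J G k : ℝ) * l ^ k := h2
  refine ⟨first, ?_⟩
  rw [avgSize, div_div_eq_mul_div, le_div_iff₀ (by positivity)]
  have e : (1 + (α : ℝ) / (l * (Fintype.card V : ℝ))) * (l * deriv (indPoly G) l)
      = (α : ℝ) * ((l / α + 1 / (Fintype.card V : ℝ)) * deriv (indPoly G) l) := by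
    field_simp
  rw [e]
  exact mul_le_mul_of_nonneg_left first (le_of_lt hα0)
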